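/- Let u, v, u', v' be vectors in a real vector space V and define the bivector wedge (a ∧ b)(β) = β(b)a - β(a)b as a map V* → V. If the 5×5 skew matrices Π₀ and Π₁ from the Henon-Heiles example are given (on coordinates (q¹, q², p₁, p₂, c)), with H₀ = c, H₁ = ½p₁² + ½p₂² + (q¹)³ + ½q¹(q²)² - cq¹, H₂ = ½q²p₁p₂ - ½q¹p₂² + (1/16)(q²)⁴ + ¼(q¹)²(q²)² - ¼c(q²)², then at every point the chain relations hold: Π₀ dH₀ = 0, Π₀ dH₁ = Π₁ dH₀, Π₀ dH₂ = Π₁ dH₁, and Π₁ dH₂ = 0. -/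

import Mathlib

/-- Gradient of a function on ℝ⁵ (column of partial derivatives). -/
noncomputable def grad5 (H : (Fin 5 → ℝ) → ℝ) (p : Fin 5 → ℝ) : Fin 5 → ℝ :=
  fun i => fderiv ℝ H p (Pi.single i 1)

/-- Canonical degenerate Poisson matrix Π₀ on ℝ⁵ with coordinates (q¹,q²,p₁,p₂,c). -/
def HHPi0 : Matrix (Fin 5) (Fin 5) ℝ :=
  !![0, 0, 1, 0, 0;
     0, 0, 0, 1, 0;
     -1, 0, 0, 0, 0;
     0, -1, 0, 0, 0;
     0, 0, 0, 0, 0]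

/-- Second Poisson matrix Π₁ of the Henon-Heiles system; p = (q¹,q²,p₁,p₂,c). -/
noncomputable def HHPi1 (p : Fin 5 → ℝ) : Matrix (Fin 5) (Fin 5) ℝ :=
  !![0, 0, p 0, p 1 / 2, p 2;
     0, 0, p 1 / 2, 0, p 3;
     -p 0, -(p 1) / 2, 0, p 3 / 2, -3 * (p 0) ^ 2 - (p 1) ^ 2 / 2 + p 4;
     -(p 1) / 2, 0, -(p 3) / 2, 0, -(p 0) * p 1;
     -(p 2), -(p 3), 3 * (p 0) ^ 2 + (p 1) ^ 2 / 2 - p 4, p 0 * p 1, 0]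

def HH0 (p : Fin 5 → ℝ) : ℝ := p 4

noncomputable def HH1 (p : Fin 5 → ℝ) : ℝ :=
  (p 2) ^ 2 / 2 + (p 3) ^ 2 / 2 + (p 0) ^ 3 + p 0 * (p 1) ^ 2 / 2 - p 4 * p 0

noncomputable def HH2 (p : Fin 5 → ℝ) : ℝ :=
  p 1 * p 2 * p 3 / 2 - p 0 * (p 3) ^ 2 / 2 + (p 1) ^ 4 / 16
    + (p 0) ^ 2 * (p 1) ^ 2 / 4 - p 4 * (p 1) ^ 2 / 4

noncomputable def Pj (i : Fin 5) : (Fin 5 → ℝ) →L[ℝ] ℝ := ContinuousLinearMap.proj i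

lemma hasP (i : Fin 5) (p : Fin 5 → ℝ) :
    HasFDerivAt (fun q : Fin 5 → ℝ => q i) (Pj i) p := (Pj i).hasFDerivAt

lemma gradHH0 (p : Fin 5 → ℝ) :
    grad5 HH0 p = ![0, 0, 0, 0, 1] := by
  have e : HH0 = fun q : Fin 5 → ℝ => q 4 := rfl
  funext i
  rw [grad5, e, (hasP 4 p).fderiv]
  fin_cases i <;> simp [Pj, Pi.single_apply]

lemma gradHH1 (p : Fin 5 → ℝ) :
    grad5 HH1 p = ![3 * p 0 ^ 2 + p 1 ^ 2 / 2 - p 4, p 0 * p 1, p 2, p 3, -p 0] := by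
  have e : HH1 = fun q : Fin 5 → ℝ =>
      q 2 * q 2 * (1/2 : ℝ) + q 3 * q 3 * (1/2 : ℝ) + q 0 * q 0 * q 0
        + q 0 * (q 1 * q 1) * (1/2 : ℝ) - q 4 * q 0 := by
    funext q; unfold HH1; ring
  have h := ((((((hasP 2 p).mul (hasP 2 p)).mul_const (1/2 : ℝ)).add
      (((hasP 3 p).mul (hasP 3 p)).mul_const (1/2 : ℝ))).add
      (((hasP 0 p).mul (hasP 0 p)).mul (hasP 0 p))).add
      (((hasP 0 p).mul ((hasP 1 p).mul (hasP 1 p))).mul_const (1/2 : ℝ))).sub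
      ((hasP 4 p).mul (hasP 0 p))
  funext i
  rw [grad5, e]
  erw [h.fderiv]
  fin_cases i <;> simp [Pj, Pi.single_apply] <;> ring

lemma gradHH2 (p : Fin 5 → ℝ) :
    grad5 HH2 p = ![-(p 3) ^ 2 / 2 + p 0 * p 1 ^ 2 / 2,
      p 2 * p 3 / 2 + p 1 ^ 3 / 4 + p 0 ^ 2 * p 1 / 2 - p 4 * p 1 / 2,
      p 1 * p 3 / 2, p 1 * p 2 / 2 - p 0 * p 3, -(p 1) ^ 2 / 4] := by
  have e : HH2 = fun q : Fin 5 → ℝ =>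
      q 1 * (q 2 * q 3) * (1/2 : ℝ) - q 0 * (q 3 * q 3) * (1/2 : ℝ)
        + q 1 * q 1 * (q 1 * q 1) * (1/16 : ℝ)
        + q 0 * q 0 * (q 1 * q 1) * (1/4 : ℝ) - q 4 * (q 1 * q 1) * (1/4 : ℝ) := by
    funext q; unfold HH2; ring
  have h := (((((((hasP 1 p).mul ((hasP 2 p).mul (hasP 3 p))).mul_const (1/2 : ℝ)).sub
      (((hasP 0 p).mul ((hasP 3 p).mul (hasP 3 p))).mul_const (1/2 : ℝ))).add
      ((((hasP 1 p).mul (hasP 1 p)).mul ((hasP 1 p).mul (hasP 1 p))).mul_const (1/16 : ℝ))).add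
      ((((hasP 0 p).mul (hasP 0 p)).mul ((hasP 1 p).mul (hasP 1 p))).mul_const (1/4 : ℝ))).sub
      (((hasP 4 p).mul ((hasP 1 p).mul (hasP 1 p))).mul_const (1/4 : ℝ)))
  funext i
  rw [grad5, e]
  erw [h.fderiv]
  fin_cases i <;> simp [Pj, Pi.single_apply] <;> ring

/-- the bi-Hamiltonian chain of the integrable Henon-Heiles system:
Π₀dH₀ = 0, Π₀dH₁ = Π₁dH₀, Π₀dH₂ = Π₁dH₁, Π₁dH₂ = 0, at every point. -/
theorem henon_heiles_chain : ∀ p : Fin 5 → ℝ,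
    HHPi0.mulVec (grad5 HH0 p) = 0 ∧
    HHPi0.mulVec (grad5 HH1 p) = (HHPi1 p).mulVec (grad5 HH0 p) ∧
    HHPi0.mulVec (grad5 HH2 p) = (HHPi1 p).mulVec (grad5 HH1 p) ∧
    (HHPi1 p).mulVec (grad5 HH2 p) = 0 := by
  intro p
  rw [gradHH0, gradHH1, gradHH2]
  refine ⟨?_, ?_, ?_, ?_⟩ <;> funext i <;> fin_cases i <;>
    simp [Matrix.mulVec, dotProduct, Fin.sum_univ_five, HHPi0, HHPi1] <;> ring
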